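/- N-retailer bullwhip criterion (paper's Formula (6) and Scenarios): Let x_1, …, x_N be demand sequences of N retailers over M review cycles of length R whose cycle-sum sequences have pairwise vanishing empirical cross-covariances, and suppose every retailer has the same total demand variance σ²_{total,j} = σ² with σ² > 0. Then the empirical variance of the aggregate batched orders Z_i = Σ_j S_{j,i} strictly exceeds the aggregate non-batched variance N σ² if and only if (Σ_{j=1}^N σ²_{within,j}) / (N σ²) < (R² − 1)/R²; equality and strict damping hold under the corresponding equality and reversed inequality. -/

import Mathlib

/-- Paper's Formula (6) and Scenarios for `N` retailers: with pairwise vanishing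
cross-covariances of cycle sums and common total variance `σ² > 0`, the aggregate
batched-order variance exceeds `N σ²` iff `(Σ_j σ²_{within,j}) / (N σ²) < (R² − 1)/R²`;
equality and strict damping hold under the corresponding equality and reversed
inequality. -/
theorem aggregate_bullwhip_criterion
    (M R N : ℕ) (hM : 0 < M) (hR : 0 < R) (hN : 0 < N)
    (x : Fin N → Fin M → Fin R → ℝ)
    (μ : Fin N → ℝ) (hμ : ∀ j, μ j = (∑ i, ∑ t, x j i t) / (M * R))
    (σ2total : Fin N → ℝ)
    (hσ2total : ∀ j, σ2total j = (∑ i, ∑ t, (x j i t - μ j) ^ 2) / (M * R))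
    (σ2 : ℝ) (hσ2 : ∀ j, σ2total j = σ2) (hσ2pos : 0 < σ2)
    (m : Fin N → Fin M → ℝ) (hm : ∀ j i, m j i = (∑ t, x j i t) / R)
    (σ2within : Fin N → ℝ)
    (hσ2within : ∀ j, σ2within j = (∑ i, (∑ t, (x j i t - m j i) ^ 2) / R) / M)
    (S : Fin N → Fin M → ℝ) (hS : ∀ j i, S j i = ∑ t, x j i t)
    (Sbar : Fin N → ℝ) (hSbar : ∀ j, Sbar j = (∑ i, S j i) / M)
    (hcov : ∀ j k, j ≠ k → (∑ i, (S j i - Sbar j) * (S k i - Sbar k)) / M = 0)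
    (Z : Fin M → ℝ) (hZ : ∀ i, Z i = ∑ j, S j i)
    (Zbar : ℝ) (hZbar : Zbar = (∑ i, Z i) / M)
    (varZ : ℝ) (hvarZ : varZ = (∑ i, (Z i - Zbar) ^ 2) / M) :
    ((N : ℝ) * σ2 < varZ ↔
      (∑ j, σ2within j) / ((N : ℝ) * σ2) < ((R : ℝ) ^ 2 - 1) / (R : ℝ) ^ 2) ∧
    (varZ = (N : ℝ) * σ2 ↔
      (∑ j, σ2within j) / ((N : ℝ) * σ2) = ((R : ℝ) ^ 2 - 1) / (R : ℝ) ^ 2) ∧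
    (varZ < (N : ℝ) * σ2 ↔
      (∑ j, σ2within j) / ((N : ℝ) * σ2) > ((R : ℝ) ^ 2 - 1) / (R : ℝ) ^ 2) := by
  have hMne : (M : ℝ) ≠ 0 := Nat.cast_ne_zero.mpr hM.ne'
  have hRne : (R : ℝ) ≠ 0 := Nat.cast_ne_zero.mpr hR.ne'
  have hNpos : (0 : ℝ) < N := Nat.cast_pos.mpr hN
  -- cycle sums via means
  have hsum : ∀ j i, ∑ t, x j i t = (R : ℝ) * m j i := by
    intro j i; rw [hm]; field_simp
  -- μ is mean of cycle means
  have hμm : ∀ j, μ j = (∑ i, m j i) / M := by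
    intro j
    rw [hμ]
    simp only [hsum, ← Finset.mul_sum]
    field_simp
  have hSm : ∀ j i, S j i = (R : ℝ) * m j i := by
    intro j i; rw [hS]; exact hsum j i
  have hSbarR : ∀ j, Sbar j = (R : ℝ) * μ j := by
    intro j
    rw [hSbar, hμm]
    simp only [hSm, ← Finset.mul_sum]
    field_simp
  -- pointwise variance decomposition within a cycle
  have hpt : ∀ j i, ∑ t, (x j i t - μ j) ^ 2
      = (∑ t, (x j i t - m j i) ^ 2) + (R : ℝ) * (m j i - μ j) ^ 2 := by
    intro j i
    have h1 : ∑ t, (x j i t - m j i) = 0 := by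
      rw [Finset.sum_sub_distrib, hsum, Finset.sum_const, Finset.card_univ,
        Fintype.card_fin]
      push_cast; ring
    have h2 : ∀ t : Fin R, (x j i t - μ j) ^ 2
        = (x j i t - m j i) ^ 2 + 2 * (m j i - μ j) * (x j i t - m j i)
          + (m j i - μ j) ^ 2 := by intro t; ring
    rw [Finset.sum_congr rfl fun t _ => h2 t]
    rw [Finset.sum_add_distrib, Finset.sum_add_distrib, ← Finset.mul_sum, h1,
      Finset.sum_const, Finset.card_univ, Fintype.card_fin]
    push_cast; ring
  -- law of total variance per retailer
  have hdecomp : ∀ j, (∑ i, (m j i - μ j) ^ 2) / M = σ2 - σ2within j := by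
    intro j
    have h := (hσ2 j).symm
    rw [hσ2total] at h
    simp only [hpt, Finset.sum_add_distrib, ← Finset.mul_sum] at h
    rw [hσ2within, ← Finset.sum_div]
    field_simp at h ⊢
    linear_combination -h
  -- variance of each cycle-sum sequence
  have hvarS : ∀ j, (∑ i, (S j i - Sbar j) ^ 2) / M
      = (R : ℝ) ^ 2 * (σ2 - σ2within j) := by
    intro j
    have hd : ∀ i, S j i - Sbar j = (R : ℝ) * (m j i - μ j) := by
      intro i; rw [hSm, hSbarR]; ring
    simp only [hd, mul_pow, ← Finset.mul_sum]
    rw [mul_div_assoc, hdecomp]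
  -- cross covariances vanish (unscaled)
  have hcov' : ∀ j k, j ≠ k → ∑ i, (S j i - Sbar j) * (S k i - Sbar k) = 0 := by
    intro j k hjk
    have h := hcov j k hjk
    rwa [div_eq_zero_iff, or_iff_left hMne] at h
  -- aggregate sum of squares splits
  have hsumZ : ∑ i, (Z i - Zbar) ^ 2 = ∑ j, ∑ i, (S j i - Sbar j) ^ 2 := by
    have hZd : ∀ i, Z i - Zbar = ∑ j, (S j i - Sbar j) := by
      intro i
      have hZb : Zbar = ∑ j, Sbar j := by
        rw [hZbar]
        simp only [hZ, hSbar, ← Finset.sum_div]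
        rw [Finset.sum_comm]
      rw [hZ, hZb, Finset.sum_sub_distrib]
    simp only [hZd]
    have hsq : ∀ i : Fin M, (∑ j, (S j i - Sbar j)) ^ 2
        = ∑ j, ∑ k, (S j i - Sbar j) * (S k i - Sbar k) := by
      intro i; rw [sq, Finset.sum_mul_sum]
    simp only [hsq]
    rw [Finset.sum_comm]
    refine Finset.sum_congr rfl fun j _ => ?_
    rw [Finset.sum_comm]
    rw [Finset.sum_eq_single j (fun k _ hk => hcov' j k (Ne.symm hk)) (by simp)]
    simp [sq]
  -- closed form for varZ
  have hW : varZ = (R : ℝ) ^ 2 * ((N : ℝ) * σ2 - ∑ j, σ2within j) := by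
    rw [hvarZ, hsumZ, Finset.sum_div, Finset.sum_congr rfl fun j _ => hvarS j,
      ← Finset.mul_sum, Finset.sum_sub_distrib, Finset.sum_const, Finset.card_univ,
      Fintype.card_fin]
    push_cast; ring
  -- final algebra
  have hc : (0 : ℝ) < (N : ℝ) * σ2 := mul_pos hNpos hσ2pos
  have hr2 : (0 : ℝ) < (R : ℝ) ^ 2 := by positivity
  refine ⟨?_, ?_, ?_⟩
  · rw [hW, div_lt_div_iff₀ hc hr2]
    constructor <;> intro h <;> nlinarith
  · rw [hW, div_eq_div_iff hc.ne' hr2.ne']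
    constructor <;> intro h <;> nlinarith
  · rw [hW, gt_iff_lt, div_lt_div_iff₀ hr2 hc]
    constructor <;> intro h <;> nlinarith
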